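/- Let X₁ be a real-valued random variable with a log-concave density and mean zero. Then 1/e ≤ P(X₁ ≥ 0) ≤ 1 - 1/e. -/

import Mathlib

open MeasureTheory Real Set
open scoped ENNReal

namespace Grunbaum

/-- The four-point inequality from log-concavity. -/
lemma four_point {g : ℝ → ℝ} (hg0 : ∀ x, 0 ≤ g x)
    (hlc : ∀ x y a b : ℝ, 0 ≤ a → 0 ≤ b → a + b = 1 →
      g x ^ a * g y ^ b ≤ g (a * x + b * y))
    {x y Δ : ℝ} (hxy : x ≤ y) (hΔ : 0 ≤ Δ) :
    g x * g (y + Δ) ≤ g (x + Δ) * g y := by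
  rcases eq_or_lt_of_le hΔ with h0 | hΔpos
  · rw [← h0, add_zero, add_zero, mul_comm]
  rcases eq_or_lt_of_le (hg0 x) with hx0 | hxpos
  · calc g x * g (y + Δ) = 0 := by rw [← hx0, zero_mul]
      _ ≤ g (x + Δ) * g y := mul_nonneg (hg0 _) (hg0 _)
  rcases eq_or_lt_of_le (hg0 (y + Δ)) with hy0 | hypos
  · calc g x * g (y + Δ) = 0 := by rw [← hy0, mul_zero]
      _ ≤ g (x + Δ) * g y := mul_nonneg (hg0 _) (hg0 _)
  set d : ℝ := y + Δ - x with hd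
  have hdpos : 0 < d := by simp only [hd]; linarith
  set a : ℝ := Δ / d with ha
  set b : ℝ := (y - x) / d with hb
  have hapos : 0 ≤ a := div_nonneg hΔ hdpos.le
  have hbpos : 0 ≤ b := div_nonneg (by linarith) hdpos.le
  have hab : a + b = 1 := by
    rw [ha, hb, ← add_div, div_eq_iff hdpos.ne', hd]
    ring
  have h1 : g x ^ b * g (y + Δ) ^ a ≤ g (x + Δ) := by
    have := hlc x (y + Δ) b a hbpos hapos (by linarith)
    have harg : b * x + a * (y + Δ) = x + Δ := by
      rw [ha, hb, div_mul_eq_mul_div, div_mul_eq_mul_div, ← add_div, div_eq_iff hdpos.ne', hd]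
      ring
    rwa [harg] at this
  have h2 : g x ^ a * g (y + Δ) ^ b ≤ g y := by
    have := hlc x (y + Δ) a b hapos hbpos hab
    have harg : a * x + b * (y + Δ) = y := by
      rw [ha, hb, div_mul_eq_mul_div, div_mul_eq_mul_div, ← add_div, div_eq_iff hdpos.ne', hd]
      ring
    rwa [harg] at this
  calc g x * g (y + Δ)
      = (g x ^ b * g (y + Δ) ^ a) * (g x ^ a * g (y + Δ) ^ b) := by
        rw [mul_mul_mul_comm, ← Real.rpow_add hxpos, ← Real.rpow_add hypos,
          add_comm b a, hab, Real.rpow_one, Real.rpow_one]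
    _ ≤ g (x + Δ) * g y := by
        refine mul_le_mul h1 h2 (mul_nonneg ?_ ?_) (hg0 _) <;>
          exact Real.rpow_nonneg (hg0 _) _

/-- Ratio inequality for the survival function of a log-concave density. -/
lemma survival_ratio {g : ℝ → ℝ} (hg0 : ∀ x, 0 ≤ g x)
    (hlc : ∀ x y a b : ℝ, 0 ≤ a → 0 ≤ b → a + b = 1 →
      g x ^ a * g y ^ b ≤ g (a * x + b * y))
    (hfin : ∀ s : ℝ, (∫⁻ x in Ici s, ENNReal.ofReal (g x)) ≠ ∞)
    {t t' Δ : ℝ} (htt : t ≤ t') (hΔ : 0 ≤ Δ) :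
    (∫⁻ x in Ici (t' + Δ), ENNReal.ofReal (g x)) * (∫⁻ x in Ici t, ENNReal.ofReal (g x))
      ≤ (∫⁻ x in Ici (t + Δ), ENNReal.ofReal (g x)) *
        (∫⁻ x in Ici t', ENNReal.ofReal (g x)) := by
  set f : ℝ → ℝ≥0∞ := fun x => ENNReal.ofReal (g x) with hf
  have hftop : ∀ x : ℝ, f x ≠ ∞ := fun x => ENNReal.ofReal_ne_top
  have hmp : MeasurePreserving (fun x : ℝ => x + Δ) volume volume :=
    measurePreserving_add_right volume Δ
  have hemb : MeasurableEmbedding (fun x : ℝ => x + Δ) :=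
    (MeasurableEquiv.addRight Δ).measurableEmbedding
  have hshift : ∀ s : Set ℝ,
      (∫⁻ x in (fun x : ℝ => x + Δ) ⁻¹' s, f (x + Δ)) = ∫⁻ x in s, f x := fun s =>
    hmp.setLIntegral_comp_preimage_emb hemb f s
  have key1 : (∫⁻ x in Ici (t' + Δ), f x) = ∫⁻ y in Ici t', f (y + Δ) := by
    rw [← hshift (Ici (t' + Δ)), preimage_add_const_Ici, add_sub_cancel_right]
  have key2 : (∫⁻ x in Ico (t + Δ) (t' + Δ), f x) = ∫⁻ x in Ico t t', f (x + Δ) := by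
    rw [← hshift (Ico (t + Δ) (t' + Δ)), preimage_add_const_Ico, add_sub_cancel_right,
      add_sub_cancel_right]
  have hdisj : ∀ u u' : ℝ, Disjoint (Ico u u') (Ici u') := fun u u' =>
    Set.disjoint_left.mpr fun x hx hx' => absurd hx' hx.2.not_ge
  have hdec : ∀ u u' : ℝ, u ≤ u' →
      (∫⁻ x in Ici u, f x) = (∫⁻ x in Ico u u', f x) + (∫⁻ x in Ici u', f x) := by
    intro u u' h
    rw [← lintegral_union measurableSet_Ici (hdisj u u'), Ico_union_Ici_eq_Ici h]
  set B := ∫⁻ x in Ico t t', f x with hB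
  set B' := ∫⁻ x in Ico (t + Δ) (t' + Δ), f x with hB'
  set Ft' := ∫⁻ x in Ici t', f x with hFt'
  set FtΔ := ∫⁻ x in Ici (t' + Δ), f x with hFtΔ
  have hBfin : B ≠ ∞ :=
    ne_top_of_le_ne_top (hfin t) (lintegral_mono_set Ico_subset_Ici_self)
  have hB'fin : B' ≠ ∞ :=
    ne_top_of_le_ne_top (hfin (t + Δ)) (lintegral_mono_set Ico_subset_Ici_self)
  have hkey : FtΔ * B ≤ B' * Ft' := by
    rw [key1]
    calc (∫⁻ y in Ici t', f (y + Δ)) * B = ∫⁻ y in Ici t', f (y + Δ) * B :=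
          (lintegral_mul_const' B _ hBfin).symm
      _ ≤ ∫⁻ y in Ici t', B' * f y := by
          refine lintegral_mono_ae ?_
          filter_upwards [ae_restrict_mem measurableSet_Ici] with y hy
          calc f (y + Δ) * B = ∫⁻ x in Ico t t', f (y + Δ) * f x :=
                (lintegral_const_mul' _ _ (hftop _)).symm
            _ ≤ ∫⁻ x in Ico t t', f (x + Δ) * f y := by
                refine lintegral_mono_ae ?_
                filter_upwards [ae_restrict_mem measurableSet_Ico] with x hx
                have hxy : x ≤ y := le_trans hx.2.le hy
                have h4 := four_point hg0 hlc hxy hΔ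
                simp only [hf]
                rw [← ENNReal.ofReal_mul (hg0 _), ← ENNReal.ofReal_mul (hg0 _)]
                exact ENNReal.ofReal_le_ofReal ((mul_comm (g (y + Δ)) (g x)).le.trans h4)
            _ = B' * f y := by
                rw [lintegral_mul_const' (f y) _ (hftop _), ← key2, mul_comm]
      _ = B' * Ft' := lintegral_const_mul' B' _ hB'fin
  have e1 : (∫⁻ x in Ici t, f x) = B + Ft' := hdec t t' htt
  have e2 : (∫⁻ x in Ici (t + Δ), f x) = B' + FtΔ := by
    rw [hdec (t + Δ) (t' + Δ) (by linarith), ← hB', ← hFtΔ]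
  rw [e1, e2, mul_add, add_mul]
  exact add_le_add hkey le_rfl

/-- Lintegral of an exponential tail. -/
lemma lint_exp (C lam a : ℝ) (hlam : 0 < lam) (hC : 0 ≤ C) :
    (∫⁻ t in Ioi a, ENNReal.ofReal (C * exp (-lam * t)))
      = ENNReal.ofReal (C * exp (-lam * a) / lam) := by
  rw [← ofReal_integral_eq_lintegral_ofReal]
  · congr 1
    have h1 : (∫ x in Ioi a, C * exp (-(lam * x)))
        = lam⁻¹ • ∫ x in Ioi (lam * a), C * exp (-x) :=
      integral_comp_mul_left_Ioi (fun x => C * exp (-x)) a hlam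
    have h2 : (∫ x in Ioi (lam * a), C * exp (-x)) = C * exp (-(lam * a)) := by
      rw [integral_const_mul, integral_exp_neg_Ioi]
    rw [show (fun t : ℝ => C * exp (-lam * t)) = fun t : ℝ => C * exp (-(lam * t)) from by
      funext t; ring_nf]
    rw [h1, h2, smul_eq_mul]
    field_simp
  · exact (exp_neg_integrableOn_Ioi a hlam).const_mul C
  · filter_upwards with x
    positivity

/-- Tail integrability from the ratio inequality. -/
lemma tail_finite (μ : Measure ℝ) [IsProbabilityMeasure μ]
    (hG : ∀ t t' Δ : ℝ, t ≤ t' → 0 ≤ Δ →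
      μ (Ici (t' + Δ)) * μ (Ici t) ≤ μ (Ici (t + Δ)) * μ (Ici t')) :
    (∫⁻ t in Ioi (0:ℝ), μ (Ici t)) ≠ ∞ := by
  have hdisj : ∀ u u' : ℝ, Disjoint (Ioc u u') (Ioi u') := fun u u' =>
    Set.disjoint_left.mpr fun x hx hx' => absurd hx' hx.2.not_gt
  have hIoc : ∀ M : ℝ, (∫⁻ t in Ioc (0:ℝ) M, μ (Ici t)) ≤ ENNReal.ofReal M := by
    intro M
    calc (∫⁻ t in Ioc (0:ℝ) M, μ (Ici t)) ≤ ∫⁻ _ in Ioc (0:ℝ) M, 1 :=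
          lintegral_mono fun _ => prob_le_one
      _ = ENNReal.ofReal M := by simp [Real.volume_Ioc]
  by_cases hz : ∃ T : ℝ, μ (Ici T) = 0
  · obtain ⟨T, hT⟩ := hz
    set M := max T 0 with hM
    rw [show Ioi (0:ℝ) = Ioc 0 M ∪ Ioi M from (Ioc_union_Ioi_eq_Ioi (le_max_right T 0)).symm,
      lintegral_union measurableSet_Ioi (hdisj 0 M)]
    have h2 : (∫⁻ t in Ioi M, μ (Ici t)) = 0 := by
      refine le_antisymm ((lintegral_mono_ae ?_).trans_eq lintegral_zero) zero_le
      filter_upwards [ae_restrict_mem measurableSet_Ioi] with t ht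
      have : μ (Ici t) ≤ μ (Ici T) :=
        measure_mono (Ici_subset_Ici.mpr ((le_max_left T 0).trans ht.le))
      simpa [hT] using this
    rw [h2, add_zero]
    exact ne_top_of_le_ne_top ENNReal.ofReal_ne_top (hIoc M)
  · push_neg at hz
    -- find `b` far right with small measure
    have hcap : (⋂ n : ℕ, Ici (n:ℝ)) = ∅ := by
      refine eq_empty_iff_forall_notMem.mpr fun x hx => ?_
      obtain ⟨n, hn⟩ := exists_nat_gt x
      exact absurd (mem_iInter.mp hx n) (by simpa using hn)
    have htend : Filter.Tendsto (fun n : ℕ => μ (Ici (n:ℝ))) Filter.atTop (nhds 0) := by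
      have := tendsto_measure_iInter_atTop (μ := μ) (s := fun n : ℕ => Ici (n:ℝ))
        (fun n => measurableSet_Ici.nullMeasurableSet)
        (fun m n h => Ici_subset_Ici.mpr (by exact_mod_cast h)) ⟨0, measure_ne_top μ _⟩
      rw [hcap] at this
      simpa [Function.comp_def] using this
    obtain ⟨nb, hnb⟩ := (htend.eventually_lt_const (by norm_num : (0:ℝ≥0∞) < 1/2)).exists
    -- find `a` far left with large measure
    have hcup : (⋃ n : ℕ, Ici (-(n:ℝ))) = univ := by
      refine eq_univ_of_forall fun x => mem_iUnion.mpr ?_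
      obtain ⟨n, hn⟩ := exists_nat_gt (-x)
      exact ⟨n, by simp; linarith⟩
    have htend2 : Filter.Tendsto (fun n : ℕ => μ (Ici (-(n:ℝ)))) Filter.atTop (nhds 1) := by
      have := tendsto_measure_iUnion_atTop (μ := μ) (s := fun n : ℕ => Ici (-(n:ℝ)))
        (fun m n h => Ici_subset_Ici.mpr (by simp; exact_mod_cast h))
      rw [hcup, measure_univ] at this
      exact this
    obtain ⟨na, hna⟩ := (htend2.eventually_const_lt (by norm_num : (1/2:ℝ≥0∞) < 1)).exists
    set A : ℝ := -(na:ℝ) with hA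
    set bb : ℝ := (nb:ℝ) with hbb
    have hab : A < bb := by
      by_contra hcon
      push_neg at hcon
      exact absurd (measure_mono (Ici_subset_Ici.mpr hcon) : μ (Ici A) ≤ μ (Ici bb))
        (by exact not_le.mpr (lt_trans hnb hna))
    set h : ℝ := bb - A with hh
    have hhpos : 0 < h := by simp only [hh]; linarith
    set Ga : ℝ := (μ (Ici A)).toReal with hGa
    set Gb : ℝ := (μ (Ici bb)).toReal with hGb
    have hGapos : 0 < Ga := ENNReal.toReal_pos (hz A) (measure_ne_top μ _)
    have hGbpos : 0 < Gb := ENNReal.toReal_pos (hz bb) (measure_ne_top μ _)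
    have hGblt : Gb < Ga := by
      refine ENNReal.toReal_lt_toReal (measure_ne_top μ _) (measure_ne_top μ _) |>.mpr ?_
      exact lt_trans hnb hna
    set r : ℝ := Gb / Ga with hr
    have hr0 : 0 < r := div_pos hGbpos hGapos
    have hr1 : r < 1 := (div_lt_one hGapos).mpr hGblt
    have grid : ∀ k : ℕ, (μ (Ici (A + k * h))).toReal ≤ Ga * r ^ k := by
      intro k
      induction k with
      | zero => simp [hGa]
      | succ k ih =>
        have step := hG A (A + k * h) h (le_add_of_nonneg_right (by positivity)) hhpos.le
        have harg : A + k * h + h = A + (k + 1 : ℕ) * h := by push_cast; ring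
        have harg2 : A + h = bb := by simp only [hh]; ring
        rw [harg, harg2] at step
        have step' : (μ (Ici (A + (k + 1 : ℕ) * h))).toReal * Ga
            ≤ Gb * (μ (Ici (A + k * h))).toReal := by
          have := ENNReal.toReal_mono
            (ENNReal.mul_ne_top (measure_ne_top μ _) (measure_ne_top μ _)) step
          rwa [ENNReal.toReal_mul, ENNReal.toReal_mul] at this
        have hfin : (μ (Ici (A + (k + 1 : ℕ) * h))).toReal * Ga ≤ (Gb * r ^ k) * Ga := by
          calc (μ (Ici (A + (k + 1 : ℕ) * h))).toReal * Ga
              ≤ Gb * (μ (Ici (A + k * h))).toReal := step'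
            _ ≤ Gb * (Ga * r ^ k) := by
                exact mul_le_mul_of_nonneg_left ih hGbpos.le
            _ = (Gb * r ^ k) * Ga := by ring
        have hX := le_of_mul_le_mul_right hfin hGapos
        calc (μ (Ici (A + (k + 1 : ℕ) * h))).toReal ≤ Gb * r ^ k := hX
          _ = Ga * r ^ (k + 1) := by
              rw [pow_succ, mul_comm (r ^ k) r, ← mul_assoc, (show Ga * r = Gb from by rw [hr]; field_simp [hGapos.ne'])]
    set lam : ℝ := -Real.log r / h with hlam
    have hlampos : 0 < lam := div_pos (neg_pos.mpr (log_neg hr0 hr1)) hhpos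
    set C : ℝ := (Ga / r) * exp (lam * A) with hC
    have hCpos : 0 < C := by positivity
    have hbound : ∀ t : ℝ, A ≤ t → (μ (Ici t)).toReal ≤ C * exp (-lam * t) := by
      intro t ht
      set k : ℕ := ⌊(t - A) / h⌋₊ with hk
      have hknn : (0:ℝ) ≤ (t - A) / h := div_nonneg (by linarith) hhpos.le
      have hk1 : A + k * h ≤ t := by
        have h1 : (k:ℝ) ≤ (t - A) / h := Nat.floor_le hknn
        have := mul_le_mul_of_nonneg_right h1 hhpos.le
        rw [div_mul_cancel₀ _ hhpos.ne'] at this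
        linarith
      have hk2 : (t - A) / h < k + 1 := Nat.lt_floor_add_one _
      have hlog : Real.log r = -lam * h := by
        rw [hlam]
        field_simp
      have hrexp : r = exp (-lam * h) := by rw [← hlog, Real.exp_log hr0]
      have hRHS : C * exp (-lam * t) = Ga * exp ((-lam * h) * ((t - A) / h - 1)) := by
        calc C * exp (-lam * t) = Ga * (exp (lam * A) * exp (-lam * t) / r) := by
              rw [hC]; ring
          _ = Ga * exp ((-lam * h) * ((t - A) / h - 1)) := by
              rw [hrexp, ← Real.exp_add, ← Real.exp_sub]
              congr 2
              field_simp
              ring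
      calc (μ (Ici t)).toReal ≤ (μ (Ici (A + k * h))).toReal :=
            ENNReal.toReal_mono (measure_ne_top μ _) (measure_mono (Ici_subset_Ici.mpr hk1))
        _ ≤ Ga * r ^ k := grid k
        _ ≤ C * exp (-lam * t) := by
            rw [hRHS, show r ^ k = exp ((k : ℝ) * (-lam * h)) from by
              rw [← hlog, ← Real.log_pow, Real.exp_log (pow_pos hr0 k)]]
            refine mul_le_mul_of_nonneg_left (exp_le_exp.mpr ?_) hGapos.le
            have hlh : 0 < lam * h := mul_pos hlampos hhpos
            have hmul := mul_le_mul_of_nonneg_left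
              (show (t - A) / h - 1 ≤ (k:ℝ) by linarith) hlh.le
            nlinarith [hmul]
    set M : ℝ := max A 0 with hM
    rw [show Ioi (0:ℝ) = Ioc 0 M ∪ Ioi M from (Ioc_union_Ioi_eq_Ioi (le_max_right A 0)).symm,
      lintegral_union measurableSet_Ioi (hdisj 0 M)]
    have h2 : (∫⁻ t in Ioi M, μ (Ici t)) ≤ ENNReal.ofReal (C * exp (-lam * M) / lam) := by
      rw [← lint_exp C lam M hlampos hCpos.le]
      refine lintegral_mono_ae ?_
      filter_upwards [ae_restrict_mem measurableSet_Ioi] with t ht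
      have hb := hbound t ((le_max_left A 0).trans ht.le)
      calc μ (Ici t) = ENNReal.ofReal ((μ (Ici t)).toReal) :=
            (ENNReal.ofReal_toReal (measure_ne_top μ _)).symm
        _ ≤ ENNReal.ofReal (C * exp (-lam * t)) := ENNReal.ofReal_le_ofReal hb
    exact ENNReal.add_ne_top.mpr ⟨ne_top_of_le_ne_top ENNReal.ofReal_ne_top (hIoc M),
      ne_top_of_le_ne_top ENNReal.ofReal_ne_top h2⟩

set_option maxHeartbeats 2000000 in
/-- Core: Grünbaum lower bound. -/
lemma core (μ : Measure ℝ) [IsProbabilityMeasure μ]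
    (hatom : ∀ a : ℝ, μ {a} = 0)
    (hG : ∀ t t' Δ : ℝ, t ≤ t' → 0 ≤ Δ →
      μ (Ici (t' + Δ)) * μ (Ici t) ≤ μ (Ici (t + Δ)) * μ (Ici t'))
    (hint : Integrable id μ) (hmean : ∫ x, x ∂μ = 0) :
    1 / Real.exp 1 ≤ (μ (Ici 0)).toReal := by
  have hfin : ∀ s : Set ℝ, μ s ≠ ∞ := fun s => measure_ne_top μ s
  have hIoiIci : ∀ s : ℝ, μ (Ioi s) = μ (Ici s) := by
    intro s
    refine le_antisymm (measure_mono Ioi_subset_Ici_self) ?_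
    calc μ (Ici s) ≤ μ ({s} ∪ Ioi s) := by
          refine measure_mono fun x hx => ?_
          rcases eq_or_lt_of_le (mem_Ici.mp hx) with h | h
          · exact Or.inl (by simp [← h])
          · exact Or.inr h
      _ ≤ μ {s} + μ (Ioi s) := measure_union_le _ _
      _ = μ (Ioi s) := by rw [hatom, zero_add]
  have hIic : ∀ s : ℝ, μ (Iic s) = 1 - μ (Ici s) := by
    intro s
    rw [← hIoiIci, show Iic s = (Ioi s)ᶜ from compl_Ioi.symm,
      measure_compl measurableSet_Ioi (hfin _), measure_univ]
  -- positive / negative parts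
  have hposint : Integrable (fun x : ℝ => max x 0) μ := hint.pos_part
  have hnegint : Integrable (fun x : ℝ => max (-x) 0) μ := hint.neg.pos_part
  set Ap := ∫ x, max x 0 ∂μ with hAp
  set Am := ∫ x, max (-x) 0 ∂μ with hAm
  have hApnn : 0 ≤ Ap := integral_nonneg fun x => le_max_right _ _
  have hAB : Ap = Am := by
    have h := integral_eq_integral_pos_part_sub_integral_neg_part hint
    simp only [id_eq, Real.coe_toNNReal'] at h
    rw [hmean] at h
    rw [hAp, hAm]
    linarith
  have hlay1 : ENNReal.ofReal Ap = ∫⁻ t in Ioi (0:ℝ), μ (Ici t) := by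
    rw [hAp, ofReal_integral_eq_lintegral_ofReal hposint
      (Filter.Eventually.of_forall fun x => le_max_right _ _)]
    rw [lintegral_eq_lintegral_meas_le μ (Filter.Eventually.of_forall fun x => le_max_right x 0)
      ((measurable_id.max measurable_const).aemeasurable)]
    refine setLIntegral_congr_fun measurableSet_Ioi
      (fun t ht => ?_)
    congr 1
    ext a
    simp only [mem_setOf_eq, mem_Ici, le_max_iff]
    exact ⟨fun hh => hh.resolve_right fun h0 => absurd (lt_of_lt_of_le ht h0) (lt_irrefl 0),
      fun hh => Or.inl hh⟩
  have hlay2 : ENNReal.ofReal Am = ∫⁻ t in Ioi (0:ℝ), μ (Iic (-t)) := by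
    rw [hAm, ofReal_integral_eq_lintegral_ofReal hnegint
      (Filter.Eventually.of_forall fun x => le_max_right _ _)]
    rw [lintegral_eq_lintegral_meas_le (f := fun x : ℝ => max (-x) 0) μ
      (Filter.Eventually.of_forall fun x => le_max_right _ 0)
      (((measurable_id.neg).max measurable_const).aemeasurable)]
    refine setLIntegral_congr_fun measurableSet_Ioi
      (fun t ht => ?_)
    congr 1
    ext a
    simp only [mem_setOf_eq, mem_Iic, le_max_iff]
    constructor
    · intro hh
      have : t ≤ -a := hh.resolve_right fun h0 => absurd (lt_of_lt_of_le ht h0) (lt_irrefl 0)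
      linarith
    · intro hh
      exact Or.inl (by linarith)
  set p := (μ (Ici 0)).toReal with hp
  by_contra hcon
  push_neg at hcon
  have hexp1 : (1:ℝ) < Real.exp 1 := by
    have := Real.exp_one_gt_d9
    linarith
  have hp1 : p < 1 := lt_trans hcon (by rw [div_lt_one (exp_pos 1)]; exact hexp1)
  rcases eq_or_lt_of_le (ENNReal.toReal_nonneg : (0:ℝ) ≤ p) with hp0 | hppos
  · -- degenerate case : μ (Ici 0) = 0
    have hmu0 : μ (Ici 0) = 0 := by
      rcases (ENNReal.toReal_eq_zero_iff _).mp hp0.symm with h | h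
      · exact h
      · exact absurd h (hfin _)
    have hae : 0 ≤ᵐ[μ] fun x : ℝ => -x := by
      rw [Filter.EventuallyLE, ae_iff]
      refine measure_mono_null (fun x hx => ?_) hmu0
      simp only [mem_setOf_eq, not_le, Pi.zero_apply] at hx
      simp only [mem_Ici]
      linarith
    have hzero : ∫ x, -x ∂μ = 0 := by
      rw [integral_neg]
      simpa using hmean
    have haez := (integral_eq_zero_iff_of_nonneg_ae hae hint.neg).mp hzero
    have hne : μ {x : ℝ | x ≠ 0} = 0 := by
      rw [Filter.EventuallyEq, ae_iff] at haez
      refine measure_mono_null (fun x hx => ?_) haez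
      simp only [mem_setOf_eq] at hx ⊢
      simp only [Pi.zero_apply]
      intro hcontra
      exact hx (by linarith [neg_eq_zero.mp hcontra])
    have huniv : (1:ℝ≥0∞) ≤ 0 := by
      calc (1:ℝ≥0∞) = μ univ := measure_univ.symm
        _ ≤ μ {x : ℝ | x ≠ 0} + μ {(0:ℝ)} := by
            refine (measure_mono fun x _ => ?_).trans (measure_union_le _ _)
            by_cases hx0 : x = 0
            · exact Or.inr (by simp [hx0])
            · exact Or.inl hx0
        _ = 0 := by rw [hne, hatom, zero_add]
    exact absurd huniv (by simp)
  -- main case : p > 0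
  have hmain : ∀ ε : ℝ, 0 < ε → ε ≤ 1/2 → -1 - ε ≤ Real.log p := by
    intro ε hε hε2
    have hioi : μ (Ioi (0:ℝ)) = ENNReal.ofReal p := by
      rw [hIoiIci]
      exact (ENNReal.ofReal_toReal (hfin _)).symm
    have hexists : ∃ hh : ℝ, 0 < hh ∧ p * Real.exp (-ε) < (μ (Ici hh)).toReal := by
      by_contra hcon2
      push_neg at hcon2
      have hun : Ioi (0:ℝ) = ⋃ n : ℕ, Ici (1/((n:ℝ)+1)) := by
        ext x
        simp only [mem_Ioi, mem_iUnion, mem_Ici]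
        constructor
        · intro hx
          obtain ⟨n, hn⟩ := exists_nat_one_div_lt hx
          exact ⟨n, hn.le⟩
        · rintro ⟨n, hn⟩
          have h0 : (0:ℝ) < 1/((n:ℝ)+1) := by positivity
          linarith
      have hdir : Directed (· ⊆ ·) (fun n : ℕ => Ici (1/((n:ℝ)+1))) := by
        intro m n
        refine ⟨max m n, Ici_subset_Ici.mpr ?_, Ici_subset_Ici.mpr ?_⟩
        · refine one_div_le_one_div_of_le (by positivity) ?_
          have : (m:ℝ) ≤ ((max m n : ℕ):ℝ) := Nat.cast_le.mpr (le_max_left m n)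
          linarith
        · refine one_div_le_one_div_of_le (by positivity) ?_
          have : (n:ℝ) ≤ ((max m n : ℕ):ℝ) := Nat.cast_le.mpr (le_max_right m n)
          linarith
      have hsup := hdir.measure_iUnion (μ := μ)
      rw [← hun, hioi] at hsup
      have hub : ∀ n : ℕ, μ (Ici (1/((n:ℝ)+1))) ≤ ENNReal.ofReal (p * Real.exp (-ε)) := by
        intro n
        have h2 := hcon2 (1/((n:ℝ)+1)) (by positivity)
        calc μ (Ici (1/((n:ℝ)+1)))
            = ENNReal.ofReal ((μ (Ici (1/((n:ℝ)+1)))).toReal) :=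
              (ENNReal.ofReal_toReal (hfin _)).symm
          _ ≤ _ := ENNReal.ofReal_le_ofReal h2
      have hle : ENNReal.ofReal p ≤ ENNReal.ofReal (p * Real.exp (-ε)) := by
        rw [hsup]
        exact iSup_le hub
      have hle' : p ≤ p * Real.exp (-ε) :=
        (ENNReal.ofReal_le_ofReal_iff (by positivity)).mp hle
      have hexpε : Real.exp (-ε) < 1 := by
        rw [Real.exp_lt_one_iff]
        linarith
      nlinarith [hppos]
    obtain ⟨hh, hhpos, hGh⟩ := hexists
    set q := (μ (Ici hh)).toReal with hq
    have hq0 : 0 < q := lt_trans (by positivity) hGh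
    have hqle : q ≤ p := by
      rw [hq, hp]
      exact ENNReal.toReal_mono (hfin _) (measure_mono (Ici_subset_Ici.mpr hhpos.le))
    set r := q / p with hrdef
    have hr0 : 0 < r := div_pos hq0 hppos
    have hr1 : r ≤ 1 := (div_le_one hppos).mpr hqle
    have hrlow : Real.exp (-ε) < r := (lt_div_iff₀ hppos).mpr (by nlinarith [hGh])
    -- right grid
    have gridR : ∀ k : ℕ, (μ (Ici ((k:ℝ) * hh))).toReal ≤ p * r ^ k := by
      intro k
      induction k with
      | zero => simp [hp]
      | succ k ih =>
        have step := hG 0 ((k:ℝ) * hh) hh (by positivity) hhpos.le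
        have harg : (k:ℝ) * hh + hh = (((k+1:ℕ)):ℝ) * hh := by push_cast; ring
        rw [harg, zero_add] at step
        have step' : (μ (Ici ((((k+1:ℕ)):ℝ) * hh))).toReal * p
            ≤ q * (μ (Ici ((k:ℝ) * hh))).toReal := by
          have := ENNReal.toReal_mono (ENNReal.mul_ne_top (hfin _) (hfin _)) step
          rwa [ENNReal.toReal_mul, ENNReal.toReal_mul, ← hp, ← hq] at this
        have hmul : (μ (Ici ((((k+1:ℕ)):ℝ) * hh))).toReal * p ≤ (p * r^(k+1)) * p := by
          calc (μ (Ici ((((k+1:ℕ)):ℝ) * hh))).toReal * p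
              ≤ q * (μ (Ici ((k:ℝ) * hh))).toReal := step'
            _ ≤ q * (p * r^k) := mul_le_mul_of_nonneg_left ih hq0.le
            _ = (p * r^(k+1)) * p := by
                rw [pow_succ, (show q = p * r from by have hp0 : p ≠ 0 := hppos.ne'; rw [hrdef]; field_simp)]
                ring
        exact le_of_mul_le_mul_right (by exact_mod_cast hmul) hppos
    -- left grid
    have gridL : ∀ k : ℕ, (μ (Ici (-((k:ℝ) * hh)))).toReal * q ^ k ≤ p ^ (k+1) := by
      intro k
      induction k with
      | zero => simp [hp]
      | succ k ih =>
        have step := hG (-((((k+1:ℕ)):ℝ) * hh)) 0 hh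
          (neg_nonpos.mpr (by positivity)) hhpos.le
        rw [zero_add] at step
        have harg : -((((k+1:ℕ)):ℝ) * hh) + hh = -((k:ℝ) * hh) := by push_cast; ring
        rw [harg] at step
        have step' : q * (μ (Ici (-((((k+1:ℕ)):ℝ) * hh)))).toReal
            ≤ (μ (Ici (-((k:ℝ) * hh)))).toReal * p := by
          have := ENNReal.toReal_mono (ENNReal.mul_ne_top (hfin _) (hfin _)) step
          rwa [ENNReal.toReal_mul, ENNReal.toReal_mul, ← hp, ← hq] at this
        have hfin2 : (μ (Ici (-((((k+1:ℕ)):ℝ) * hh)))).toReal * q ^ (k+1) ≤ p ^ (k+2) := by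
          calc (μ (Ici (-((((k+1:ℕ)):ℝ) * hh)))).toReal * q ^ (k+1)
              = (q * (μ (Ici (-((((k+1:ℕ)):ℝ) * hh)))).toReal) * q ^ k := by ring
            _ ≤ ((μ (Ici (-((k:ℝ) * hh)))).toReal * p) * q ^ k :=
                mul_le_mul_of_nonneg_right step' (pow_nonneg hq0.le k)
            _ = ((μ (Ici (-((k:ℝ) * hh)))).toReal * q ^ k) * p := by ring
            _ ≤ p ^ (k+1) * p := mul_le_mul_of_nonneg_right ih hppos.le
            _ = p ^ (k+2) := by ring
        exact_mod_cast hfin2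
    set lam := -Real.log r / hh with hlamdef
    have hlamnn : 0 ≤ lam :=
      div_nonneg (neg_nonneg.mpr (Real.log_nonpos hr0.le hr1)) hhpos.le
    have hlog : Real.log r = -(lam * hh) := by
      rw [hlamdef]
      field_simp
    have hgrid : ∀ m : ℤ, (μ (Ici ((m:ℝ) * hh))).toReal ≤ p * r ^ m := by
      intro m
      cases m with
      | ofNat k =>
        have := gridR k
        rw [show ((Int.ofNat k : ℤ):ℝ) = (k:ℝ) from by push_cast; rfl]
        rw [show (r:ℝ) ^ (Int.ofNat k : ℤ) = r ^ k from by
          rw [show (Int.ofNat k : ℤ) = (k:ℤ) from rfl, zpow_natCast]]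
        exact this
      | negSucc k =>
        have hqpow : (0:ℝ) < q ^ (k+1) := pow_pos hq0 _
        have hL := gridL (k+1)
        rw [show ((Int.negSucc k : ℤ):ℝ) * hh = -((((k+1:ℕ)):ℝ) * hh) from by
          rw [Int.cast_negSucc]; push_cast; ring]
        rw [zpow_negSucc]
        have hrpow : r ^ (k+1) = q^(k+1) / p^(k+1) := by rw [hrdef, div_pow]
        rw [hrpow, show p * (q^(k+1)/p^(k+1))⁻¹ = p^(k+2)/q^(k+1) from by
          rw [inv_div]
          field_simp
          ring]
        rw [le_div_iff₀ hqpow]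
        calc (μ (Ici (-((((k+1:ℕ)):ℝ) * hh)))).toReal * q ^ (k+1) ≤ p ^ (k+1+1) := hL
          _ = p ^ (k+2) := by ring
    have hbound : ∀ t : ℝ, (μ (Ici t)).toReal ≤ (p/r) * Real.exp (-lam * t) := by
      intro t
      set m : ℤ := ⌊t / hh⌋ with hm
      have hm1 : (m:ℝ) * hh ≤ t := by
        have h1 := Int.floor_le (t/hh)
        have h2 := mul_le_mul_of_nonneg_right h1 hhpos.le
        rwa [div_mul_cancel₀ _ hhpos.ne'] at h2
      have hm2 : t / hh < (m:ℝ) + 1 := Int.lt_floor_add_one _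
      have ht2 : t < ((m:ℝ)+1) * hh := by
        have := mul_lt_mul_of_pos_right hm2 hhpos
        rwa [div_mul_cancel₀ _ hhpos.ne'] at this
      have hZ : (r:ℝ) ^ m = Real.exp (Real.log r * m) := by
        rw [← Real.rpow_intCast r m, Real.rpow_def_of_pos hr0]
      have hPr : p / r = p * Real.exp (lam * hh) := by
        rw [show (r:ℝ) = Real.exp (-(lam * hh)) from by rw [← hlog, Real.exp_log hr0]]
        rw [Real.exp_neg, div_eq_mul_inv, inv_inv]
      calc (μ (Ici t)).toReal ≤ (μ (Ici ((m:ℝ) * hh))).toReal :=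
            ENNReal.toReal_mono (hfin _) (measure_mono (Ici_subset_Ici.mpr hm1))
        _ ≤ p * r ^ m := hgrid m
        _ ≤ (p/r) * Real.exp (-lam * t) := by
            rw [hZ, hPr, hlog, mul_assoc, ← Real.exp_add]
            refine mul_le_mul_of_nonneg_left (exp_le_exp.mpr ?_) hppos.le
            have h3 := mul_le_mul_of_nonneg_left
              (show t - hh ≤ (m:ℝ) * hh by nlinarith) hlamnn
            nlinarith
    set K := p / r with hKdef
    have hKpos : 0 < K := div_pos hppos hr0
    have hbound' : ∀ t : ℝ, μ (Ici t) ≤ ENNReal.ofReal (K * Real.exp (-lam * t)) := by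
      intro t
      rw [← ENNReal.ofReal_toReal (hfin (Ici t))]
      exact ENNReal.ofReal_le_ofReal (hbound t)
    rcases eq_or_lt_of_le hlamnn with hlam0 | hlampos
    · -- lam = 0 : contradiction via infinite negative part
      have hr1' : r = 1 := by
        have hlogr0 : Real.log r = 0 := by
          rw [hlog, ← hlam0]
          ring
        rcases Real.log_eq_zero.mp hlogr0 with h | h | h
        · exact absurd h hr0.ne'
        · exact h
        · nlinarith [hr0]
      have hmm_inf : (∫⁻ t in Ioi (0:ℝ), μ (Iic (-t))) = ∞ := by
        have hlow : ∀ᵐ t ∂(volume.restrict (Ioi (0:ℝ))),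
            (1 - ENNReal.ofReal p) ≤ μ (Iic (-t)) := by
          filter_upwards [ae_restrict_mem measurableSet_Ioi] with t ht
          rw [hIic]
          refine tsub_le_tsub_left ?_ 1
          have hb := hbound (-t)
          rw [← hlam0] at hb
          simp only [zero_mul, neg_zero, Real.exp_zero, mul_one, neg_neg] at hb
          have hKp : K = p := by rw [hKdef, hr1', div_one]
          rw [hKp] at hb
          calc μ (Ici (-t)) = ENNReal.ofReal ((μ (Ici (-t))).toReal) :=
                (ENNReal.ofReal_toReal (hfin _)).symm
            _ ≤ ENNReal.ofReal p := ENNReal.ofReal_le_ofReal hb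
        have hge := lintegral_mono_ae hlow
        rw [setLIntegral_const, Real.volume_Ioi, ENNReal.mul_top] at hge
        · exact top_unique hge
        · rw [ne_eq, tsub_eq_zero_iff_le]
          exact not_le.mpr (ENNReal.ofReal_lt_one.mpr hp1)
      rw [← hlay2] at hmm_inf
      exact absurd hmm_inf ENNReal.ofReal_ne_top
    · -- lam > 0
      have hK1 : K < 1 := by
        have h1 : K < p / Real.exp (-ε) := by
          rw [hKdef]
          exact div_lt_div_of_pos_left hppos (exp_pos _) hrlow
        have h2 : p / Real.exp (-ε) = p * Real.exp ε := by
          rw [Real.exp_neg, div_eq_mul_inv, inv_inv]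
        have h3 : p * Real.exp ε < (1/Real.exp 1) * Real.exp (1/2) :=
          mul_lt_mul hcon (exp_le_exp.mpr hε2) (exp_pos ε) (by positivity)
        have h4 : (1/Real.exp 1) * Real.exp (1/2) < 1 := by
          rw [div_mul_eq_mul_div, one_mul, div_lt_one (exp_pos 1)]
          exact exp_lt_exp.mpr (by norm_num)
        calc K < p / Real.exp (-ε) := h1
          _ = p * Real.exp ε := h2
          _ < (1/Real.exp 1) * Real.exp (1/2) := h3
          _ < 1 := h4
      set T := -Real.log K / lam with hTdef
      have hTpos : 0 < T := div_pos (neg_pos.mpr (Real.log_neg hKpos hK1)) hlampos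
      have hup : (∫⁻ t in Ioi (0:ℝ), μ (Ici t))
          ≤ ENNReal.ofReal (K * Real.exp (-lam * 0) / lam) := by
        rw [← lint_exp K lam 0 hlampos hKpos.le]
        exact lintegral_mono fun t => hbound' t
      have hKT : K * Real.exp (lam * T) = 1 := by
        rw [hTdef, show lam * (-Real.log K / lam) = -Real.log K from by
          rw [mul_comm, div_mul_cancel₀ _ hlampos.ne']]
        rw [Real.exp_neg, Real.exp_log hKpos]
        field_simp
      have hIocint : (∫ t in Ioc (0:ℝ) T, (1 - K * Real.exp (lam * t)))
          = T - (1 - K)/lam := by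
        rw [← intervalIntegral.integral_of_le hTpos.le]
        have hi1 : IntervalIntegrable (fun t : ℝ => K * Real.exp (lam * t)) volume 0 T :=
          (continuous_const.mul (Real.continuous_exp.comp
            (continuous_const.mul continuous_id))).intervalIntegrable _ _
        rw [intervalIntegral.integral_sub intervalIntegrable_const hi1,
          intervalIntegral.integral_const, intervalIntegral.integral_const_mul]
        have hcomp : lam * ∫ x in (0:ℝ)..T, Real.exp (lam * x)
            = Real.exp (lam*T) - 1 := by
          rw [intervalIntegral.mul_integral_comp_mul_left (f := Real.exp), integral_exp, mul_zero, Real.exp_zero]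
        have hexpint : (∫ x in (0:ℝ)..T, Real.exp (lam * x))
            = (Real.exp (lam*T) - 1)/lam := by
          rw [eq_div_iff hlampos.ne', mul_comm]
          exact hcomp
        rw [hexpint]
        have hKe : K * (Real.exp (lam*T) - 1) = 1 - K := by nlinarith [hKT]
        rw [mul_div_assoc] at *
        rw [show K * ((Real.exp (lam*T) - 1)/lam) = (1-K)/lam from by
          rw [← hKe]; ring]
        simp
      have hlowcalc : ENNReal.ofReal (T - (1-K)/lam)
          ≤ ∫⁻ t in Ioi (0:ℝ), μ (Iic (-t)) := by
        have hnonneg : ∀ t ∈ Ioc (0:ℝ) T, 0 ≤ 1 - K * Real.exp (lam * t) := by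
          intro t ht
          have hee : Real.exp (lam * t) ≤ Real.exp (lam * T) :=
            exp_le_exp.mpr (mul_le_mul_of_nonneg_left ht.2 hlampos.le)
          nlinarith [hKT, hKpos]
        have hcont : Continuous fun t : ℝ => 1 - K * Real.exp (lam * t) :=
          continuous_const.sub (continuous_const.mul (Real.continuous_exp.comp
            (continuous_const.mul continuous_id)))
        calc ENNReal.ofReal (T - (1-K)/lam)
            = ∫⁻ t in Ioc (0:ℝ) T, ENNReal.ofReal (1 - K * Real.exp (lam * t)) := by
              rw [← hIocint, ofReal_integral_eq_lintegral_ofReal]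
              · exact hcont.integrableOn_Ioc
              · rw [Filter.EventuallyLE, ae_restrict_iff' measurableSet_Ioc]
                exact Filter.Eventually.of_forall hnonneg
          _ ≤ ∫⁻ t in Ioc (0:ℝ) T, μ (Iic (-t)) := by
              refine lintegral_mono_ae ?_
              filter_upwards [ae_restrict_mem measurableSet_Ioc] with t ht
              rw [hIic]
              have hb := hbound' (-t)
              rw [show -lam * -t = lam * t from by ring] at hb
              calc ENNReal.ofReal (1 - K * Real.exp (lam * t))
                  = 1 - ENNReal.ofReal (K * Real.exp (lam * t)) := by
                    rw [ENNReal.ofReal_sub 1 (by positivity), ENNReal.ofReal_one]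
                _ ≤ 1 - μ (Ici (-t)) := tsub_le_tsub_left hb 1
          _ ≤ ∫⁻ t in Ioi (0:ℝ), μ (Iic (-t)) := lintegral_mono_set Ioc_subset_Ioi_self
      have hchain : ENNReal.ofReal (T - (1-K)/lam)
          ≤ ENNReal.ofReal (K * Real.exp (-lam*0) / lam) := by
        calc ENNReal.ofReal (T - (1-K)/lam) ≤ ∫⁻ t in Ioi (0:ℝ), μ (Iic (-t)) := hlowcalc
          _ = ENNReal.ofReal Am := hlay2.symm
          _ = ENNReal.ofReal Ap := by rw [hAB]
          _ = ∫⁻ t in Ioi (0:ℝ), μ (Ici t) := hlay1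
          _ ≤ _ := hup
      have hreal : T - (1-K)/lam ≤ K / lam := by
        have hh2 := (ENNReal.ofReal_le_ofReal_iff (by positivity)).mp hchain
        simpa [mul_zero, Real.exp_zero] using hh2
      have hlamT : lam * T ≤ 1 := by
        have h5 : T ≤ 1/lam := by
          have h6 : (1-K)/lam + K/lam = 1/lam := by
            rw [← add_div]
            norm_num
          linarith
        calc lam * T ≤ lam * (1/lam) := mul_le_mul_of_nonneg_left h5 hlampos.le
          _ = 1 := by field_simp
      have hlogK : -1 ≤ Real.log K := by
        have h7 : lam * T = -Real.log K := by
          rw [hTdef, mul_comm, div_mul_cancel₀ _ hlampos.ne']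
        linarith
      have hlogKval : Real.log K = Real.log p - Real.log r := by
        rw [hKdef, Real.log_div hppos.ne' hr0.ne']
      have hlogrlow : -ε ≤ Real.log r := by
        have h8 := Real.log_lt_log (exp_pos (-ε)) hrlow
        rw [Real.log_exp] at h8
        linarith
      linarith [hlogK, hlogKval, hlogrlow]
  have hlogp : -1 ≤ Real.log p := by
    by_contra hcon2
    push_neg at hcon2
    have hεpos : 0 < min (1/2) ((-1 - Real.log p)/2) := lt_min (by norm_num) (by linarith)
    have h1 := hmain _ hεpos (min_le_left _ _)
    have h2 : min (1/2) ((-1 - Real.log p)/2) ≤ (-1 - Real.log p)/2 := min_le_right _ _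
    linarith
  have hfinal : 1 / Real.exp 1 ≤ p := by
    rw [show (1:ℝ) / Real.exp 1 = Real.exp (-1) from by rw [Real.exp_neg]; exact one_div _]
    calc Real.exp (-1) ≤ Real.exp (Real.log p) := exp_le_exp.mpr hlogp
      _ = p := Real.exp_log hppos
  exact absurd hfinal (not_le.mpr hcon)

end Grunbaum

/-- Grünbaum's lemma: a real random variable with log-concave density and
barycenter at the origin satisfies `1/e ≤ P(X₁ ≥ 0) ≤ 1 - 1/e`. -/
theorem grunbaum_lemma
    {Ω : Type*} [MeasurableSpace Ω] (ℙ : Measure Ω) [IsProbabilityMeasure ℙ]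
    (X₁ : Ω → ℝ) (hX : Measurable X₁)
    (g : ℝ → ℝ) (hg0 : ∀ x, 0 ≤ g x)
    (hlc : ∀ x y a b : ℝ, 0 ≤ a → 0 ≤ b → a + b = 1 →
      g x ^ a * g y ^ b ≤ g (a * x + b * y))
    (hdens : Measure.map X₁ ℙ = volume.withDensity (fun x => ENNReal.ofReal (g x)))
    (hmean : ∫ ω, X₁ ω ∂ℙ = 0) :
    1 / Real.exp 1 ≤ (ℙ {ω | 0 ≤ X₁ ω}).toReal ∧
      (ℙ {ω | 0 ≤ X₁ ω}).toReal ≤ 1 - 1 / Real.exp 1 := by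
  classical
  open Grunbaum in
  set f : ℝ → ℝ≥0∞ := fun x => ENNReal.ofReal (g x) with hf
  set μ : Measure ℝ := Measure.map X₁ ℙ with hμ
  haveI hprob : IsProbabilityMeasure μ := Measure.isProbabilityMeasure_map hX.aemeasurable
  have happ : ∀ s : Set ℝ, MeasurableSet s → μ s = ∫⁻ x in s, f x := by
    intro s hs
    rw [hdens, withDensity_apply _ hs]
  have hatom : ∀ a : ℝ, μ {a} = 0 := by
    intro a
    rw [happ _ (measurableSet_singleton a)]
    exact setLIntegral_measure_zero _ _ (measure_singleton a)
  have htot : ∀ s : ℝ, (∫⁻ x in Set.Ici s, f x) ≠ ∞ := by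
    intro s
    rw [← happ _ measurableSet_Ici]
    exact measure_ne_top μ _
  have hGμ : ∀ t t' Δ : ℝ, t ≤ t' → 0 ≤ Δ →
      μ (Set.Ici (t' + Δ)) * μ (Set.Ici t) ≤ μ (Set.Ici (t + Δ)) * μ (Set.Ici t') := by
    intro t t' Δ htt hΔ
    rw [happ _ measurableSet_Ici, happ _ measurableSet_Ici, happ _ measurableSet_Ici,
      happ _ measurableSet_Ici]
    exact Grunbaum.survival_ratio hg0 hlc htot htt hΔ
  -- the reflected setting
  set g' : ℝ → ℝ := fun x => g (-x) with hg'
  have hg0' : ∀ x, 0 ≤ g' x := fun x => hg0 _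
  have hlc' : ∀ x y a b : ℝ, 0 ≤ a → 0 ≤ b → a + b = 1 →
      g' x ^ a * g' y ^ b ≤ g' (a * x + b * y) := by
    intro x y a b ha hb hab
    have h2 := hlc (-x) (-y) a b ha hb hab
    rw [show a * -x + b * -y = -(a * x + b * y) from by ring] at h2
    exact h2
  have hnegmp : MeasurePreserving (fun x : ℝ => -x) volume volume :=
    Measure.measurePreserving_neg _
  have hnegemb : MeasurableEmbedding (fun x : ℝ => -x) :=
    (Homeomorph.neg ℝ).measurableEmbedding
  have hflip : ∀ s : ℝ, (∫⁻ x in Set.Ici s, ENNReal.ofReal (g' x))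
      = ∫⁻ x in Set.Iic (-s), f x := by
    intro s
    have h3 := hnegmp.setLIntegral_comp_preimage_emb hnegemb f (Set.Iic (-s))
    rw [show (fun x : ℝ => -x) ⁻¹' (Set.Iic (-s)) = Set.Ici s from by
      ext x
      simp only [Set.mem_preimage, Set.mem_Iic, Set.mem_Ici]
      constructor <;> intro <;> linarith] at h3
    exact h3
  set μ' : Measure ℝ := Measure.map (fun x : ℝ => -x) μ with hμ'
  haveI hprob' : IsProbabilityMeasure μ' := Measure.isProbabilityMeasure_map measurable_neg.aemeasurable
  have hIicIci : ∀ t : ℝ, μ' (Set.Ici t) = μ (Set.Iic (-t)) := by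
    intro t
    rw [hμ', Measure.map_apply measurable_neg measurableSet_Ici,
      show (fun x : ℝ => -x) ⁻¹' (Set.Ici t) = Set.Iic (-t) from by
        ext x
        simp only [Set.mem_preimage, Set.mem_Ici, Set.mem_Iic]
        constructor <;> intro <;> linarith]
  have happIci' : ∀ t : ℝ, μ' (Set.Ici t) = ∫⁻ x in Set.Ici t, ENNReal.ofReal (g' x) := by
    intro t
    rw [hIicIci t, happ _ measurableSet_Iic, hflip t]
  have htot' : ∀ s : ℝ, (∫⁻ x in Set.Ici s, ENNReal.ofReal (g' x)) ≠ ∞ := by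
    intro s
    rw [← happIci']
    exact measure_ne_top μ' _
  have hGμ' : ∀ t t' Δ : ℝ, t ≤ t' → 0 ≤ Δ →
      μ' (Set.Ici (t' + Δ)) * μ' (Set.Ici t) ≤ μ' (Set.Ici (t + Δ)) * μ' (Set.Ici t') := by
    intro t t' Δ htt hΔ
    rw [happIci', happIci', happIci', happIci']
    exact Grunbaum.survival_ratio hg0' hlc' htot' htt hΔ
  have hatom' : ∀ a : ℝ, μ' {a} = 0 := by
    intro a
    rw [hμ', Measure.map_apply measurable_neg (measurableSet_singleton a),
      show (fun x : ℝ => -x) ⁻¹' {a} = {-a} from by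
        ext x
        simp [neg_eq_iff_eq_neg]]
    exact hatom (-a)
  -- integrability of the identity
  have htail1 : (∫⁻ t in Set.Ioi (0:ℝ), μ (Set.Ici t)) ≠ ∞ := Grunbaum.tail_finite μ hGμ
  have htail2 : (∫⁻ t in Set.Ioi (0:ℝ), μ' (Set.Ici t)) ≠ ∞ := Grunbaum.tail_finite μ' hGμ'
  have hint : Integrable id μ := by
    refine ⟨measurable_id.aestronglyMeasurable, ?_⟩
    rw [hasFiniteIntegral_iff_norm]
    have hlay := lintegral_eq_lintegral_meas_le (f := fun x : ℝ => ‖x‖) μ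
      (Filter.Eventually.of_forall fun x => norm_nonneg x) measurable_norm.aemeasurable
    rw [show (∫⁻ a, ENNReal.ofReal ‖id a‖ ∂μ) = ∫⁻ a, ENNReal.ofReal ‖a‖ ∂μ from rfl, hlay]
    have hsum : (∫⁻ t in Set.Ioi (0:ℝ), μ {a : ℝ | t ≤ ‖a‖})
        ≤ (∫⁻ t in Set.Ioi (0:ℝ), μ (Set.Ici t)) + ∫⁻ t in Set.Ioi (0:ℝ), μ' (Set.Ici t) := by
      have hmeas1 : Measurable fun t : ℝ => μ (Set.Ici t) :=
        Antitone.measurable fun s t hst => measure_mono (Set.Ici_subset_Ici.mpr hst)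
      have hmeas2 : Measurable fun t : ℝ => μ' (Set.Ici t) :=
        Antitone.measurable fun s t hst => measure_mono (Set.Ici_subset_Ici.mpr hst)
      rw [← lintegral_add_left hmeas1]
      refine lintegral_mono fun t => ?_
      rw [hIicIci]
      calc μ {a : ℝ | t ≤ ‖a‖} ≤ μ (Set.Ici t ∪ Set.Iic (-t)) := by
            refine measure_mono fun a ha => ?_
            rcases le_abs.mp (by simpa [Real.norm_eq_abs] using ha) with h | h
            · exact Or.inl h
            · exact Or.inr (by simpa [Set.mem_Iic] using by linarith)
        _ ≤ μ (Set.Ici t) + μ (Set.Iic (-t)) := measure_union_le _ _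
    exact lt_of_le_of_lt hsum (lt_top_iff_ne_top.mpr
      (ENNReal.add_ne_top.mpr ⟨htail1, htail2⟩))
  have hmean' : ∫ x, x ∂μ = 0 := by
    exact (integral_map (φ := X₁) hX.aemeasurable aestronglyMeasurable_id).trans hmean
  have hlow := Grunbaum.core μ hatom hGμ hint hmean'
  have hint' : Integrable id μ' := by
    rw [show μ' = Measure.map (fun x : ℝ => -x) μ from rfl,
      integrable_map_measure aestronglyMeasurable_id measurable_neg.aemeasurable]
    exact hint.neg
  have hmean'' : ∫ x, x ∂μ' = 0 := by
    have h9 : ∫ x : ℝ, x ∂μ' = ∫ x : ℝ, -x ∂μ :=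
      integral_map (φ := fun x : ℝ => -x) measurable_neg.aemeasurable aestronglyMeasurable_id
    rw [h9, integral_neg]
    simpa using hmean'
  have hup := Grunbaum.core μ' hatom' hGμ' hint' hmean''
  have hPμ : ℙ {ω | 0 ≤ X₁ ω} = μ (Set.Ici 0) := by
    rw [hμ, Measure.map_apply hX measurableSet_Ici]
    rfl
  have hIoiIci0 : μ (Set.Ioi (0:ℝ)) = μ (Set.Ici 0) := by
    refine le_antisymm (measure_mono Set.Ioi_subset_Ici_self) ?_
    calc μ (Set.Ici (0:ℝ)) ≤ μ ({(0:ℝ)} ∪ Set.Ioi 0) := by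
          refine measure_mono fun x hx => ?_
          rcases eq_or_lt_of_le (Set.mem_Ici.mp hx) with h | h
          · exact Or.inl (by simp [← h])
          · exact Or.inr h
      _ ≤ μ {(0:ℝ)} + μ (Set.Ioi 0) := measure_union_le _ _
      _ = μ (Set.Ioi 0) := by rw [hatom, zero_add]
  have hcompl : μ (Set.Iic (0:ℝ)) = 1 - μ (Set.Ici 0) := by
    rw [← hIoiIci0, show Set.Iic (0:ℝ) = (Set.Ioi 0)ᶜ from compl_Ioi.symm,
      measure_compl measurableSet_Ioi (measure_ne_top μ _), measure_univ]
  constructor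
  · rw [hPμ]
    exact hlow
  · rw [hPμ]
    have h1 : μ' (Set.Ici (0:ℝ)) = 1 - μ (Set.Ici 0) := by
      rw [hIicIci 0, neg_zero, hcompl]
    rw [h1] at hup
    have h2 : (1 - μ (Set.Ici 0)).toReal = 1 - (μ (Set.Ici 0)).toReal := by
      rw [ENNReal.toReal_sub_of_le prob_le_one ENNReal.one_ne_top]
      simp
    rw [h2] at hup
    linarith
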